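/- arXiv:0812.3933 — 3 statements merged into one kernel-verified Lean document; each statement's English description precedes it below -/
import Mathlib

section
/- For every permutation π, every sequence of forward-march operations (each an FM prefix reversal or an FM prefix transposition) that transforms π into the identity permutation has length at least ⌈b′(π)/3⌉; i.e., d′(π) ≥ ⌈b′(π)/3⌉. -/
/-- A permutation on `n` elements: a list `[π₀, π₁, …, π_{n+1}]` of distinct
naturals that is a rearrangement of `0, 1, …, n+1` with `π₀ = 0` and
`π_{n+1} = n+1`. -/
def IsPerm (n : ℕ) (π : List ℕ) : Prop :=
  π.Perm (List.range (n + 2)) ∧ π.getD 0 0 = 0 ∧ π.getD (n + 1) 0 = n + 1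

/-- Breakpoint count `b(π)`: `1` plus the number of indices `i` with
`2 ≤ i ≤ n+1` and `|π_i − π_{i−1}| ≠ 1` (these are exactly the consecutive
pairs of the tail `π₁, …, π_{n+1}`). -/
def bp (π : List ℕ) : ℕ :=
  1 + ((π.drop 1).zip (π.drop 2)).countP
        (fun p => !(p.1 + 1 == p.2 || p.2 + 1 == p.1))

/-- Redefined breakpoint count `b′(π)`: the number of indices `i` with
`1 ≤ i ≤ n+1` and `|π_i − π_{i−1}| ≠ 1`. -/
def bp' (π : List ℕ) : ℕ :=
  (π.zip (π.drop 1)).countP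
    (fun p => !(p.1 + 1 == p.2 || p.2 + 1 == p.1))

/-- Prefix reversal `β(1,j)`: `[π₀, π_{j−1}, …, π₁, π_j, …, π_{n+1}]`. -/
def prefixReversal (π : List ℕ) (j : ℕ) : List ℕ :=
  π.take 1 ++ ((π.drop 1).take (j - 1)).reverse ++ π.drop j

/-- Prefix transposition `τ(1,j,k)`:
`[π₀, π_j, …, π_{k−1}, π₁, …, π_{j−1}, π_k, …, π_{n+1}]`. -/
def prefixTransposition (π : List ℕ) (j k : ℕ) : List ℕ :=
  π.take 1 ++ (π.drop j).take (k - j) ++ (π.drop 1).take (j - 1) ++ π.drop k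

/-- Prefix transreversal `βτ(1,j,k)`:
`[π₀, π_j, …, π_{k−1}, π_{j−1}, …, π₁, π_k, …, π_{n+1}]`. -/
def prefixTransreversal (π : List ℕ) (j k : ℕ) : List ℕ :=
  π.take 1 ++ (π.drop j).take (k - j) ++ ((π.drop 1).take (j - 1)).reverse ++ π.drop k

/-- A prefix operation: a prefix reversal, a prefix transposition, or a
prefix transreversal. -/
inductive PrefOp
  | rev (j : ℕ)
  | trans (j k : ℕ)
  | transrev (j k : ℕ)

/-- Apply a prefix operation to a permutation. -/
def PrefOp.apply (π : List ℕ) : PrefOp → List ℕ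
  | .rev j => prefixReversal π j
  | .trans j k => prefixTransposition π j k
  | .transrev j k => prefixTransreversal π j k

/-- Validity of a prefix operation on a permutation of `n` elements:
`3 ≤ j ≤ n+1` for a prefix reversal, `2 ≤ j < k ≤ n+1` for a prefix
transposition or a prefix transreversal. -/
def PrefOp.Valid (n : ℕ) : PrefOp → Prop
  | .rev j => 3 ≤ j ∧ j ≤ n + 1
  | .trans j k => 2 ≤ j ∧ j < k ∧ k ≤ n + 1
  | .transrev j k => 2 ≤ j ∧ j < k ∧ k ≤ n + 1

/-- Is the operation a prefix reversal? -/
def PrefOp.isRev : PrefOp → Bool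
  | .rev _ => true
  | _ => false

/-- Is the operation a prefix transreversal? -/
def PrefOp.isTransrev : PrefOp → Bool
  | .transrev _ _ => true
  | _ => false

/-- Apply a sequence of prefix operations, left to right. -/
def applySeq : List ℕ → List PrefOp → List ℕ
  | π, [] => π
  | π, o :: os => applySeq (o.apply π) os

/-- All operations in the sequence are valid for permutations of `n` elements. -/
def ValidSeq (n : ℕ) (ops : List PrefOp) : Prop :=
  ∀ o ∈ ops, o.Valid n

/-- `fm π` is `m(π) + 1`, where `m(π)` is the largest index `m` such that
`π_i = i` for all `0 ≤ i ≤ m`; i.e. the length of the longest already-sorted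
prefix of `π`. -/
def fm (π : List ℕ) : ℕ :=
  ((List.range π.length).takeWhile (fun i => π.getD i 0 == i)).length

/-- Forward-march prefix reversal: reverses the segment
`π_{m(π)+1}, …, π_{j−1}` in place. -/
def fmPrefixReversal (π : List ℕ) (j : ℕ) : List ℕ :=
  π.take (fm π) ++ ((π.drop (fm π)).take (j - fm π)).reverse ++ π.drop j

/-- Forward-march prefix transposition: cuts the segment
`π_{m(π)+1}, …, π_{j−1}` and pastes it between `π_{k−1}` and `π_k`. -/
def fmPrefixTransposition (π : List ℕ) (j k : ℕ) : List ℕ :=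
  π.take (fm π) ++ (π.drop j).take (k - j) ++
    (π.drop (fm π)).take (j - fm π) ++ π.drop k

/-- A forward-march operation: an FM prefix reversal or an FM prefix
transposition. -/
inductive FMOp
  | rev (j : ℕ)
  | trans (j k : ℕ)

/-- Apply a forward-march operation. -/
def FMOp.apply (π : List ℕ) : FMOp → List ℕ
  | .rev j => fmPrefixReversal π j
  | .trans j k => fmPrefixTransposition π j k

/-- Validity of a forward-march operation on a permutation `π` of `n`
elements: `m(π)+3 ≤ j ≤ n+1` for an FM prefix reversal, and
`m(π)+2 ≤ j ≤ n`, `j < k ≤ n+1` for an FM prefix transposition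
(recall `fm π = m(π) + 1`). -/
def FMOp.Valid (n : ℕ) (π : List ℕ) : FMOp → Prop
  | .rev j => fm π + 2 ≤ j ∧ j ≤ n + 1
  | .trans j k => fm π + 1 ≤ j ∧ j ≤ n ∧ j < k ∧ k ≤ n + 1

/-- Is the forward-march operation an FM prefix reversal? -/
def FMOp.isRev : FMOp → Bool
  | .rev _ => true
  | _ => false

/-- Apply a sequence of forward-march operations, left to right. -/
def applyFMSeq : List ℕ → List FMOp → List ℕ
  | π, [] => π
  | π, o :: os => applyFMSeq (o.apply π) os

/-- Validity of a sequence of forward-march operations, where each operation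
must be valid for the permutation obtained after applying the previous ones. -/
def FMValidSeq (n : ℕ) : List ℕ → List FMOp → Prop
  | _, [] => True
  | π, o :: os => o.Valid n π ∧ FMValidSeq n (o.apply π) os

namespace BPAux

def c (a b : ℕ) : ℕ := if a + 1 = b ∨ b + 1 = a then 0 else 1

lemma bp'_nil : bp' [] = 0 := rfl

lemma bp'_single (a : ℕ) : bp' [a] = 0 := rfl

lemma bp'_cons_cons (a b : ℕ) (L : List ℕ) :
    bp' (a :: b :: L) = c a b + bp' (b :: L) := by
  unfold bp'
  simp only [List.drop_one, List.tail_cons, List.drop_succ_cons, List.drop_zero,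
    List.zip_cons_cons, List.countP_cons]
  have hc : (if (!(a + 1 == b || b + 1 == a)) = true then 1 else 0) = c a b := by
    by_cases h1 : a + 1 = b
    · simp [c, h1]
    · by_cases h2 : b + 1 = a
      · simp [c, h1, h2]
      · simp [c, h1, h2]
  omega

lemma c_comm (a b : ℕ) : c a b = c b a := by
  simp [c]; split <;> split <;> first | rfl | omega

lemma bp'_split (X : List ℕ) (y : ℕ) (Y : List ℕ) :
    bp' (X ++ y :: Y) = bp' (X ++ [y]) + bp' (y :: Y) := by
  induction X with
  | nil => simp [bp'_single]
  | cons x X ih =>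
    cases X with
    | nil => simp [bp'_cons_cons, bp'_single]
    | cons x' X' =>
      have e1 : (x :: x' :: X') ++ y :: Y = x :: x' :: (X' ++ y :: Y) := by simp
      have e2 : (x :: x' :: X') ++ [y] = x :: x' :: (X' ++ [y]) := by simp
      rw [e1, e2, bp'_cons_cons, bp'_cons_cons]
      have := ih
      simp only [List.cons_append] at this
      omega

lemma bp'_snoc_le (X : List ℕ) (y : ℕ) : bp' (X ++ [y]) ≤ bp' X + 1 := by
  induction X with
  | nil => simp [bp'_single, bp'_nil]
  | cons x X ih =>
    cases X with
    | nil => simp [bp'_cons_cons, bp'_single, bp'_nil, c]; split <;> omega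
    | cons x' X' =>
      have e2 : (x :: x' :: X') ++ [y] = x :: x' :: (X' ++ [y]) := by simp
      rw [e2, bp'_cons_cons, bp'_cons_cons]
      simp only [List.cons_append] at ih
      omega

lemma le_bp'_snoc (X : List ℕ) (y : ℕ) : bp' X ≤ bp' (X ++ [y]) := by
  induction X with
  | nil => simp [bp'_nil]
  | cons x X ih =>
    cases X with
    | nil => simp [bp'_single]
    | cons x' X' =>
      have e2 : (x :: x' :: X') ++ [y] = x :: x' :: (X' ++ [y]) := by simp
      rw [e2, bp'_cons_cons, bp'_cons_cons]
      simp only [List.cons_append] at ih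
      omega

lemma bp'_append_le (X Y : List ℕ) : bp' (X ++ Y) ≤ bp' X + bp' Y + 1 := by
  cases Y with
  | nil => simp [bp'_nil]
  | cons y Y' =>
    rw [bp'_split]
    have := bp'_snoc_le X y
    omega

lemma le_bp'_append (X Y : List ℕ) : bp' X + bp' Y ≤ bp' (X ++ Y) := by
  cases Y with
  | nil => simp [bp'_nil]
  | cons y Y' =>
    rw [bp'_split]
    have := le_bp'_snoc X y
    omega

lemma bp'_reverse (L : List ℕ) : bp' L.reverse = bp' L := by
  induction L with
  | nil => rfl
  | cons a M ih =>
    cases M with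
    | nil => rfl
    | cons b L' =>
      have e : (a :: b :: L').reverse = (b :: L').reverse ++ [a] := by simp
      rw [e]
      have e2 : (b :: L').reverse ++ [a] = L'.reverse ++ (b :: [a]) := by simp
      rw [e2, bp'_split]
      have e3 : L'.reverse ++ [b] = (b :: L').reverse := by simp
      rw [e3, ih, bp'_cons_cons b a, bp'_single, bp'_cons_cons a b L']
      have := c_comm a b
      omega

lemma bp'_range' (m a : ℕ) : bp' (List.range' a m) = 0 := by
  induction m generalizing a with
  | zero => rfl
  | succ m ih =>
    cases m with
    | zero => rfl
    | succ m' =>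
      rw [List.range'_succ, List.range'_succ, bp'_cons_cons]
      rw [← List.range'_succ]
      rw [ih (a + 1)]
      simp [c]

lemma bp'_range (m : ℕ) : bp' (List.range m) = 0 := by
  rw [List.range_eq_range']; exact bp'_range' m 0

lemma bp'_step (n : ℕ) (π : List ℕ) (o : FMOp) (hv : o.Valid n π) :
    bp' π ≤ bp' (o.apply π) + 3 := by
  cases o with
  | rev j =>
    obtain ⟨h1, h2⟩ := hv
    set m := fm π with hm
    have hmj : m ≤ j := by omega
    have hdec : ((π.drop m).take (j - m)) ++ π.drop j = π.drop m := by
      have : π.drop j = (π.drop m).drop (j - m) := by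
        rw [List.drop_drop]
        congr 1
        omega
      rw [this, List.take_append_drop]
    have hπeq : π = π.take m ++ (((π.drop m).take (j - m)) ++ π.drop j) := by
      rw [hdec, List.take_append_drop]
    have hub : bp' π ≤ bp' (π.take m) + bp' ((π.drop m).take (j - m)) + bp' (π.drop j) + 2 := by
      conv_lhs => rw [hπeq]
      have h3 := bp'_append_le (π.take m) (((π.drop m).take (j - m)) ++ π.drop j)
      have h4 := bp'_append_le ((π.drop m).take (j - m)) (π.drop j)
      omega
    have hlb : bp' (π.take m) + bp' ((π.drop m).take (j - m)) + bp' (π.drop j)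
        ≤ bp' (FMOp.apply π (FMOp.rev j)) := by
      show _ ≤ bp' (fmPrefixReversal π j)
      unfold fmPrefixReversal
      have h3 := le_bp'_append (π.take m) ((((π.drop m).take (j - m)).reverse) ++ π.drop j)
      have h4 := le_bp'_append (((π.drop m).take (j - m)).reverse) (π.drop j)
      rw [bp'_reverse] at h4
      rw [← hm, List.append_assoc]
      omega
    omega
  | trans j k =>
    obtain ⟨h1, h2, h3, h4⟩ := hv
    set m := fm π with hm
    have hmj : m ≤ j := by omega
    have hjk : j ≤ k := by omega
    have hdec1 : ((π.drop j).take (k - j)) ++ π.drop k = π.drop j := by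
      have : π.drop k = (π.drop j).drop (k - j) := by
        rw [List.drop_drop]; congr 1; omega
      rw [this, List.take_append_drop]
    have hdec2 : ((π.drop m).take (j - m)) ++ π.drop j = π.drop m := by
      have : π.drop j = (π.drop m).drop (j - m) := by
        rw [List.drop_drop]; congr 1; omega
      rw [this, List.take_append_drop]
    have hπeq : π = π.take m ++ (((π.drop m).take (j - m)) ++ (((π.drop j).take (k - j)) ++ π.drop k)) := by
      rw [hdec1, hdec2, List.take_append_drop]
    have hub : bp' π ≤ bp' (π.take m) + bp' ((π.drop m).take (j - m)) +
        bp' ((π.drop j).take (k - j)) + bp' (π.drop k) + 3 := by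
      conv_lhs => rw [hπeq]
      have ha := bp'_append_le (π.take m) (((π.drop m).take (j - m)) ++ (((π.drop j).take (k - j)) ++ π.drop k))
      have hb := bp'_append_le ((π.drop m).take (j - m)) (((π.drop j).take (k - j)) ++ π.drop k)
      have hc := bp'_append_le ((π.drop j).take (k - j)) (π.drop k)
      omega
    have hlb : bp' (π.take m) + bp' ((π.drop m).take (j - m)) +
        bp' ((π.drop j).take (k - j)) + bp' (π.drop k)
        ≤ bp' (FMOp.apply π (FMOp.trans j k)) := by
      show _ ≤ bp' (fmPrefixTransposition π j k)
      unfold fmPrefixTransposition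
      rw [← hm]
      have ha := le_bp'_append (π.take m) (((π.drop j).take (k - j)) ++ (((π.drop m).take (j - m)) ++ π.drop k))
      have hb := le_bp'_append ((π.drop j).take (k - j)) (((π.drop m).take (j - m)) ++ π.drop k)
      have hc := le_bp'_append ((π.drop m).take (j - m)) (π.drop k)
      rw [List.append_assoc, List.append_assoc]
      omega
    omega

lemma key (n : ℕ) (ops : List FMOp) : ∀ π : List ℕ, FMValidSeq n π ops →
    applyFMSeq π ops = List.range (n + 2) → bp' π ≤ 3 * ops.length := by
  induction ops with
  | nil =>
    intro π _ hs
    simp [applyFMSeq] at hs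
    rw [hs, bp'_range]
    simp
  | cons o os ih =>
    intro π hv hs
    obtain ⟨hv1, hv2⟩ := hv
    have h1 := bp'_step n π o hv1
    have h2 := ih (o.apply π) hv2 hs
    simp only [List.length_cons]
    omega

end BPAux

/-- every sequence of forward-march operations sorting `π` has
length at least `⌈b′(π)/3⌉`. -/

theorem sortFM_length_lower_bound
    (n : ℕ) (π : List ℕ) (hπ : IsPerm n π)
    (ops : List FMOp) (hval : FMValidSeq n π ops)
    (hsort : applyFMSeq π ops = List.range (n + 2)) :
    (bp' π + 2) / 3 ≤ ops.length := by
  have := BPAux.key n ops π hval hsort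
  omega
end

section
/- Let π = [π_0, π_1, …, π_{n+1}] be a permutation that is not the identity. Then there exists a forward-march operation o, which is either an FM prefix reversal or an FM prefix transposition, such that b′(π·o) ≤ b′(π) − 1, i.e., applying o removes at least one redefined breakpoint. -/
section Helpers
open List
private def brkP : ℕ × ℕ → Bool := fun p => !(p.1 + 1 == p.2 || p.2 + 1 == p.1)

lemma brkP_symm (a b : ℕ) : brkP (a, b) = brkP (b, a) := by
  simp [brkP, Bool.or_comm]

lemma pairs_cons (a : ℕ) (l : List ℕ) (h : l ≠ []) :
    (a :: l).zip ((a :: l).drop 1) = (a, l.headD 0) :: l.zip (l.drop 1) := by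
  cases l with
  | nil => simp at h
  | cons b t => simp [List.zip]

lemma pairs_append (A B : List ℕ) (hA : A ≠ []) (hB : B ≠ []) :
    (A ++ B).zip ((A ++ B).drop 1) =
      A.zip (A.drop 1) ++ (A.getLastD 0, B.headD 0) :: B.zip (B.drop 1) := by
  induction A with
  | nil => simp at hA
  | cons a A ih =>
    cases A with
    | nil =>
      rw [List.singleton_append, pairs_cons a B hB]
      simp
    | cons a' A' =>
      have h' : (a' :: A') ≠ [] := by simp
      rw [List.cons_append, pairs_cons a ((a' :: A') ++ B) (by simp),
        pairs_cons a (a' :: A') h', ih h']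
      simp

lemma bp'_append (A B : List ℕ) (hA : A ≠ []) (hB : B ≠ []) :
    bp' (A ++ B) = bp' A + bp' B +
      (if brkP (A.getLastD 0, B.headD 0) then 1 else 0) := by
  unfold bp'
  rw [pairs_append A B hA hB, List.countP_append, List.countP_cons]
  simp only [brkP]
  rw [Nat.add_assoc]
  rfl

lemma bp'_singleton (a : ℕ) : bp' [a] = 0 := rfl

lemma bp'_cons (a : ℕ) (l : List ℕ) (h : l ≠ []) :
    bp' (a :: l) = bp' l + (if brkP (a, l.headD 0) then 1 else 0) := by
  unfold bp'
  rw [pairs_cons a l h, List.countP_cons]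
  simp only [brkP]
  rfl

lemma getLastD_reverse (l : List ℕ) : l.reverse.getLastD 0 = l.headD 0 := by
  cases l with
  | nil => rfl
  | cons a t => simp [List.getLastD_eq_getLast?, List.getLast?_reverse]

lemma bp'_reverse (l : List ℕ) : bp' l.reverse = bp' l := by
  induction l with
  | nil => rfl
  | cons a t ih =>
    cases t with
    | nil => rfl
    | cons b t' =>
      rw [List.reverse_cons,
        bp'_append _ [a] (by simp) (by simp), bp'_singleton, ih,
        bp'_cons a _ (by simp), getLastD_reverse, brkP_symm]
      simp

lemma headD_eq_getD (l : List ℕ) : l.headD 0 = l.getD 0 0 := by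
  cases l <;> rfl

lemma getLastD_eq_getD (l : List ℕ) : l.getLastD 0 = l.getD (l.length - 1) 0 := by
  rw [List.getLastD_eq_getLast?, List.getLast?_eq_getElem?, List.getD_eq_getElem?_getD]

lemma length_drop_take (l : List ℕ) (a k : ℕ) (h : a + k ≤ l.length) :
    ((l.drop a).take k).length = k := by
  simp [List.length_take, List.length_drop]; omega

lemma getD_drop_take (l : List ℕ) (a k i : ℕ) (hi : i < k) (h : a + k ≤ l.length) :
    ((l.drop a).take k).getD i 0 = l.getD (a + i) 0 := by
  have h1 : i < ((l.drop a).take k).length := by rw [length_drop_take l a k h]; exact hi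
  rw [List.getD_eq_getElem _ _ h1, List.getD_eq_getElem _ _ (by omega)]
  rw [List.getElem_take, List.getElem_drop]

lemma headD_drop_take (l : List ℕ) (a k : ℕ) (hk : 0 < k) (h : a + k ≤ l.length) :
    ((l.drop a).take k).headD 0 = l.getD a 0 := by
  rw [_root_.headD_eq_getD, getD_drop_take l a k 0 hk h]
  simp

lemma getLastD_drop_take (l : List ℕ) (a k : ℕ) (hk : 0 < k) (h : a + k ≤ l.length) :
    ((l.drop a).take k).getLastD 0 = l.getD (a + k - 1) 0 := by
  rw [getLastD_eq_getD, length_drop_take l a k h,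
    getD_drop_take l a (k) (k-1) (by omega) h]
  congr 1; omega

lemma headD_drop (l : List ℕ) (a : ℕ) (h : a < l.length) :
    (l.drop a).headD 0 = l.getD a 0 := by
  rw [_root_.headD_eq_getD, List.getD_eq_getElem _ _ (by simp; omega),
    List.getD_eq_getElem _ _ h, List.getElem_drop]
  simp

lemma drop_take_ne_nil (l : List ℕ) (a k : ℕ) (hk : 0 < k) (h : a + k ≤ l.length) :
    (l.drop a).take k ≠ [] := by
  apply List.ne_nil_of_length_pos
  rw [length_drop_take l a k h]; exact hk

lemma drop_ne_nil (l : List ℕ) (a : ℕ) (h : a < l.length) : l.drop a ≠ [] := by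
  apply List.ne_nil_of_length_pos; simp; omega

lemma fm_takeWhile_eq (π : List ℕ) :
    (List.range π.length).takeWhile (fun i => π.getD i 0 == i)
      = List.range (min (fm π) π.length) := by
  have h := List.takeWhile_prefix (l := List.range π.length)
    (fun i => π.getD i 0 == i)
  rw [List.prefix_iff_eq_take] at h
  rw [h, List.take_range]
  rfl

lemma fm_le_length (π : List ℕ) : fm π ≤ π.length := by
  have := congrArg List.length (fm_takeWhile_eq π)
  simp only [List.length_range] at this
  unfold fm at this ⊢
  omega

lemma fm_sorted (π : List ℕ) : ∀ i < fm π, π.getD i 0 = i := by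
  intro i hi
  have hm : i ∈ (List.range π.length).takeWhile (fun i => π.getD i 0 == i) := by
    rw [fm_takeWhile_eq]
    rw [List.mem_range]
    have := fm_le_length π
    omega
  have := List.mem_takeWhile_imp hm
  simpa using this

lemma fm_stop (π : List ℕ) (h : fm π < π.length) : π.getD (fm π) 0 ≠ fm π := by
  have hsplit := List.takeWhile_append_dropWhile
    (p := fun i => π.getD i 0 == i) (l := List.range π.length)
  have htl : ((List.range π.length).takeWhile (fun i => π.getD i 0 == i)).length
      = fm π := rfl
  have hlen : ((List.range π.length).dropWhile (fun i => π.getD i 0 == i)).length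
      = π.length - fm π := by
    have := congrArg List.length hsplit
    simp only [List.length_append, List.length_range] at this
    omega
  have hDne : (List.range π.length).dropWhile (fun i => π.getD i 0 == i) ≠ [] :=
    List.ne_nil_of_length_pos (by omega)
  have hhead := List.head_dropWhile_not (fun i => π.getD i 0 == i)
    (l := List.range π.length) hDne
  have h0 : (0:ℕ) < ((List.range π.length).dropWhile (fun i => π.getD i 0 == i)).length := by
    omega
  have e : ((List.range π.length).dropWhile (fun i => π.getD i 0 == i))[0]'h0 = fm π := by
    have h1 : fm π < (List.range π.length).length := by simpa using h
    have hx : fm π < ((List.range π.length).takeWhile (fun i => π.getD i 0 == i) ++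
        (List.range π.length).dropWhile (fun i => π.getD i 0 == i)).length := by
      rw [hsplit]; exact h1
    have h2 := (List.getElem_of_eq hsplit hx).trans (List.getElem_range _)
    rw [List.getElem_append_right (by omega)] at h2
    have hz : fm π -
        ((List.range π.length).takeWhile (fun i => π.getD i 0 == i)).length = 0 := by
      omega
    simp only [hz] at h2
    exact h2
  rw [List.head_eq_getElem, e] at hhead
  intro hc
  rw [hc] at hhead
  simp at hhead


lemma brkP_true_iff (a b : ℕ) : brkP (a, b) = true ↔ a + 1 ≠ b ∧ b + 1 ≠ a := by
  simp [brkP]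

lemma brkP_false_iff (a b : ℕ) : brkP (a, b) = false ↔ a + 1 = b ∨ b + 1 = a := by
  simp [brkP]
  tauto

lemma getLastD_take (l : List ℕ) (k : ℕ) (hk : 0 < k) (h : k ≤ l.length) :
    (l.take k).getLastD 0 = l.getD (k - 1) 0 := by
  rw [show l.take k = (l.drop 0).take k by rw [List.drop_zero],
    getLastD_drop_take l 0 k hk (by omega), show 0 + k - 1 = k - 1 by omega]

lemma headD_reverse (l : List ℕ) : l.reverse.headD 0 = l.getLastD 0 := by
  have h := getLastD_reverse l.reverse
  rw [List.reverse_reverse] at h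
  exact h.symm

lemma headD_append (A B : List ℕ) (hA : A ≠ []) :
    (A ++ B).headD 0 = A.headD 0 := by
  cases A with
  | nil => simp at hA
  | cons a t => rfl

lemma bp'_three (P X T : List ℕ) (hP : P ≠ []) (hX : X ≠ []) (hT : T ≠ []) :
    bp' (P ++ (X ++ T)) = bp' P + bp' X + bp' T
      + (if brkP (P.getLastD 0, X.headD 0) then 1 else 0)
      + (if brkP (X.getLastD 0, T.headD 0) then 1 else 0) := by
  rw [bp'_append P (X ++ T) hP (by simp [hX, hT]), bp'_append X T hX hT,
    headD_append X T hX]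
  omega

lemma bp'_four (P S M T : List ℕ) (hP : P ≠ []) (hS : S ≠ []) (hM : M ≠ [])
    (hT : T ≠ []) :
    bp' (P ++ (S ++ (M ++ T))) = bp' P + bp' S + bp' M + bp' T
      + (if brkP (P.getLastD 0, S.headD 0) then 1 else 0)
      + (if brkP (S.getLastD 0, M.headD 0) then 1 else 0)
      + (if brkP (M.getLastD 0, T.headD 0) then 1 else 0) := by
  rw [bp'_append P (S ++ (M ++ T)) hP (by simp [hS, hM, hT]),
    bp'_three S M T hS hM hT, headD_append S (M ++ T) hS]
  omega

end Helpers

/-- if `π` is not the identity, then some forward-march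
operation removes at least one redefined breakpoint. -/
theorem exists_fmOp_removing_bp'
    (n : ℕ) (π : List ℕ) (hπ : IsPerm n π)
    (hid : π ≠ List.range (n + 2)) :
    ∃ o : FMOp, o.Valid n π ∧ bp' (o.apply π) ≤ bp' π - 1 := by
  obtain ⟨hperm, h0, hlast⟩ := hπ
  have hL : π.length = n + 2 := by simpa using hperm.length_eq
  have hnd : π.Nodup := (hperm.nodup_iff).mpr List.nodup_range
  have hfle := fm_le_length π
  have hsort := fm_sorted π
  have hflt : fm π < π.length := by
    rcases lt_or_eq_of_le hfle with h | h
    · exact h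
    · exfalso
      apply hid
      apply List.ext_getElem (by simp [hL])
      intro i h1 h2
      rw [List.getElem_range]
      have hs := hsort i (by omega)
      rwa [List.getD_eq_getElem _ _ h1] at hs
  have hfne := fm_stop π hflt
  set f := fm π with hf
  have hf1 : 1 ≤ f := by
    by_contra hc
    push_neg at hc
    have hz : f = 0 := by omega
    rw [hz] at hfne
    exact hfne h0
  have hfn : f ≤ n := by
    by_contra hc
    push_neg at hc
    have hz : f = n + 1 := by omega
    rw [hz] at hfne
    exact hfne hlast
  have hinj : ∀ i j, i < π.length → j < π.length →
      π.getD i 0 = π.getD j 0 → i = j := by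
    intro i j hi hj hij
    rw [List.getD_eq_getElem _ _ hi, List.getD_eq_getElem _ _ hj] at hij
    exact (hnd.getElem_inj_iff).mp hij
  have hfmem : f ∈ π := hperm.mem_iff.mpr (List.mem_range.mpr (by omega))
  obtain ⟨p, hpL, hpval⟩ := List.mem_iff_getElem.mp hfmem
  have gp : π.getD p 0 = f := by rw [List.getD_eq_getElem _ _ hpL, hpval]
  have hfp : f < p := by
    rcases lt_trichotomy p f with h | h | h
    · have := hsort p h; omega
    · subst h; exact absurd gp hfne
    · exact h
  have hpn : p ≤ n := by
    by_contra hc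
    push_neg at hc
    have hp1 : p = n + 1 := by omega
    rw [hp1, hlast] at gp
    omega
  have hPne : π.take f ≠ [] := by
    apply List.ne_nil_of_length_pos
    simp [hL]
    omega
  have hlastP : (π.take f).getLastD 0 = f - 1 := by
    rw [getLastD_take π f (by omega) (by omega)]
    exact hsort (f - 1) (by omega)
  have i1 : brkP (f - 1, π.getD f 0) = true := by
    rw [brkP_true_iff]
    constructor
    · intro h; apply hfne; omega
    · intro h
      have h2 := hsort (f - 2) (by omega)
      have := hinj f (f - 2) (by omega) (by omega) (by omega)
      omega
  have i1' : brkP (f - 1, f) = false := by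
    rw [brkP_false_iff]; left; omega
  by_cases hA : π.getD (p + 1) 0 = f + 1
  · -- transposition case
    have hex : ∃ r, p ≤ r ∧ r ≤ n ∧ π.getD (r + 1) 0 ≠ π.getD r 0 + 1 := by
      by_contra hc
      push_neg at hc
      have key : ∀ r, p ≤ r → r ≤ n + 1 → π.getD r 0 = f + (r - p) := by
        intro r
        induction r with
        | zero => intro h1 h2; omega
        | succ r ih =>
          intro h1 h2
          rcases Nat.lt_or_ge p (r + 1) with h | h
          · have hr : p ≤ r := by omega
            rw [hc r hr (by omega), ih hr (by omega)]
            omega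
          · rw [show r + 1 = p by omega, gp]
            omega
      have := key (n + 1) (by omega) (by omega)
      rw [hlast] at this
      omega
    obtain ⟨hq1, hq2, hq3⟩ := Nat.find_spec hex
    set q := Nat.find hex with hqdef
    have hmin : ∀ r, p ≤ r → r < q → π.getD (r + 1) 0 = π.getD r 0 + 1 := by
      intro r h1 h2
      have hm := Nat.find_min hex h2
      push_neg at hm
      exact hm h1 (by omega)
    have hqp1 : p + 1 ≤ q := by
      by_contra hc
      push_neg at hc
      have : q = p := by omega
      rw [this] at hq3
      rw [hA, gp] at hq3
      omega
    have hrun : ∀ r, p ≤ r → r ≤ q → π.getD r 0 = f + (r - p) := by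
      intro r
      induction r with
      | zero => intro h1 h2; omega
      | succ r ih =>
        intro h1 h2
        rcases Nat.lt_or_ge p (r + 1) with h | h
        · have hr : p ≤ r := by omega
          rw [hmin r hr (by omega), ih hr (by omega)]
          omega
        · rw [show r + 1 = p by omega, gp]
          omega
    refine ⟨FMOp.trans p (q + 1), ?_, ?_⟩
    · show fm π + 1 ≤ p ∧ p ≤ n ∧ p < q + 1 ∧ q + 1 ≤ n + 1
      omega
    · have hSne : (π.drop f).take (p - f) ≠ [] :=
        drop_take_ne_nil π f (p - f) (by omega) (by omega)
      have hMne : (π.drop p).take (q + 1 - p) ≠ [] :=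
        drop_take_ne_nil π p (q + 1 - p) (by omega) (by omega)
      have hTne : π.drop (q + 1) ≠ [] := drop_ne_nil π (q + 1) (by omega)
      have e1 : π.drop f = (π.drop f).take (p - f) ++ π.drop p := by
        conv_lhs => rw [← List.take_append_drop (p - f) (π.drop f)]
        congr 1
        rw [List.drop_drop]
        congr 1
        omega
      have e2 : π.drop p = (π.drop p).take (q + 1 - p) ++ π.drop (q + 1) := by
        conv_lhs => rw [← List.take_append_drop (q + 1 - p) (π.drop p)]
        congr 1
        rw [List.drop_drop]
        congr 1
        omega
      have hdecomp : π = π.take f ++ ((π.drop f).take (p - f) ++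
          ((π.drop p).take (q + 1 - p) ++ π.drop (q + 1))) := by
        conv_lhs => rw [← List.take_append_drop f π, e1, e2]
      have happly : FMOp.apply π (FMOp.trans p (q + 1))
          = π.take f ++ ((π.drop p).take (q + 1 - p) ++
            ((π.drop f).take (p - f) ++ π.drop (q + 1))) := by
        show fmPrefixTransposition π p (q + 1) = _
        unfold fmPrefixTransposition
        rw [← hf]
        simp only [List.append_assoc]
      have hheadS : ((π.drop f).take (p - f)).headD 0 = π.getD f 0 :=
        headD_drop_take π f (p - f) (by omega) (by omega)
      have hlastS : ((π.drop f).take (p - f)).getLastD 0 = π.getD (p - 1) 0 := by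
        rw [getLastD_drop_take π f (p - f) (by omega) (by omega),
          show f + (p - f) - 1 = p - 1 by omega]
      have hheadM : ((π.drop p).take (q + 1 - p)).headD 0 = f := by
        rw [headD_drop_take π p (q + 1 - p) (by omega) (by omega)]
        exact gp
      have hlastM : ((π.drop p).take (q + 1 - p)).getLastD 0 = π.getD q 0 := by
        rw [getLastD_drop_take π p (q + 1 - p) (by omega) (by omega),
          show p + (q + 1 - p) - 1 = q by omega]
      have hheadT : (π.drop (q + 1)).headD 0 = π.getD (q + 1) 0 :=
        headD_drop π (q + 1) (by omega)
      have j2 : brkP (π.getD (p - 1) 0, f) = true := by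
        rw [brkP_true_iff]
        constructor
        · intro h
          have h2 := hsort (f - 1) (by omega)
          have := hinj (p - 1) (f - 1) (by omega) (by omega) (by omega)
          omega
        · intro h
          have := hinj (p - 1) (p + 1) (by omega) (by omega) (by omega)
          omega
      have j3 : brkP (π.getD q 0, π.getD (q + 1) 0) = true := by
        rw [brkP_true_iff]
        constructor
        · intro h
          exact hq3 h.symm
        · intro h
          have r1 := hrun q (by omega) (by omega)
          have r2 := hrun (q - 1) (by omega) (by omega)
          have := hinj (q + 1) (q - 1) (by omega) (by omega) (by omega)
          omega
      have hπb : bp' π = bp' (π.take f) + bp' ((π.drop f).take (p - f))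
          + bp' ((π.drop p).take (q + 1 - p)) + bp' (π.drop (q + 1)) + 3 := by
        conv_lhs => rw [hdecomp]
        rw [bp'_four _ _ _ _ hPne hSne hMne hTne, hlastP, hheadS, hlastS,
          hheadM, hlastM, hheadT, if_pos i1, if_pos j2, if_pos j3]
      rw [happly, bp'_four _ _ _ _ hPne hMne hSne hTne, hlastP, hheadM,
        hlastM, hheadS, hlastS, hheadT, if_neg (by simp [i1'])]
      have hb1 : (if brkP (π.getD q 0, π.getD f 0) = true then 1 else 0) ≤ 1 := by
        split <;> omega
      have hb2 : (if brkP (π.getD (p - 1) 0, π.getD (q + 1) 0) = true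
          then 1 else 0) ≤ 1 := by
        split <;> omega
      omega
  · -- reversal case
    refine ⟨FMOp.rev (p + 1), ?_, ?_⟩
    · show fm π + 2 ≤ p + 1 ∧ p + 1 ≤ n + 1
      omega
    · have hXne : (π.drop f).take (p + 1 - f) ≠ [] :=
        drop_take_ne_nil π f (p + 1 - f) (by omega) (by omega)
      have hTne : π.drop (p + 1) ≠ [] := drop_ne_nil π (p + 1) (by omega)
      have hdecomp : π = π.take f ++
          ((π.drop f).take (p + 1 - f) ++ π.drop (p + 1)) := by
        conv_lhs => rw [← List.take_append_drop f π]
        congr 1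
        conv_lhs => rw [← List.take_append_drop (p + 1 - f) (π.drop f)]
        congr 1
        rw [List.drop_drop]
        congr 1
        omega
      have happly : FMOp.apply π (FMOp.rev (p + 1))
          = π.take f ++ (((π.drop f).take (p + 1 - f)).reverse ++ π.drop (p + 1)) := by
        show fmPrefixReversal π (p + 1) = _
        unfold fmPrefixReversal
        rw [← hf]
        simp only [List.append_assoc]
      have hheadX : ((π.drop f).take (p + 1 - f)).headD 0 = π.getD f 0 :=
        headD_drop_take π f (p + 1 - f) (by omega) (by omega)
      have hlastX : ((π.drop f).take (p + 1 - f)).getLastD 0 = f := by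
        rw [getLastD_drop_take π f (p + 1 - f) (by omega) (by omega),
          show f + (p + 1 - f) - 1 = p by omega]
        exact gp
      have hheadT : (π.drop (p + 1)).headD 0 = π.getD (p + 1) 0 :=
        headD_drop π (p + 1) (by omega)
      have i2 : brkP (f, π.getD (p + 1) 0) = true := by
        rw [brkP_true_iff]
        constructor
        · intro h
          exact hA h.symm
        · intro h
          have h2 := hsort (f - 1) (by omega)
          have := hinj (p + 1) (f - 1) (by omega) (by omega) (by omega)
          omega
      have hπb : bp' π = bp' (π.take f) + bp' ((π.drop f).take (p + 1 - f))
          + bp' (π.drop (p + 1)) + 2 := by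
        conv_lhs => rw [hdecomp]
        rw [bp'_three _ _ _ hPne hXne hTne, hlastP, hheadX, hlastX, hheadT,
          if_pos i1, if_pos i2]
      rw [happly, bp'_three _ _ _ hPne (by simp [hXne]) hTne, bp'_reverse,
        hlastP, headD_reverse, getLastD_reverse, hlastX, hheadX, hheadT,
        if_neg (by simp [i1'])]
      have hb : (if brkP (π.getD f 0, π.getD (p + 1) 0) = true then 1 else 0) ≤ 1 := by
        split <;> omega
      omega
end

section
/- (Adaptive lower bound for prefix reversals, prefix transpositions and prefix transreversals) Let π be a permutation and let o_1, …, o_ℓ be a sequence of operations, each a prefix reversal, a prefix transposition, or a prefix transreversal, that transforms π into the identity permutation, and suppose exactly r of the operations o_1, …, o_ℓ are prefix reversals. Then 2ℓ ≥ b(π) − 1 + r, i.e., ℓ ≥ (b(π) − 1 + r)/2. (This yields the adaptive approximation ratios 3 − 3r/(b(π)+r−1) for SortByRT3 and 2 − 2r/(b(π)+r−1) for SortByRT2 when an optimal algorithm applies r prefix reversals.) -/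
namespace SortRTTAux

/-- Junction predicate: `true` iff the pair is a breakpoint. -/
def prj (p : ℕ × ℕ) : Bool := !(p.1 + 1 == p.2 || p.2 + 1 == p.1)

/-- Number of breakpoints among consecutive pairs of `L`. -/
def fbp (L : List ℕ) : ℕ := (L.zip (L.drop 1)).countP prj

lemma prj_swap (a b : ℕ) : prj (a, b) = prj (b, a) := by
  simp [prj, Bool.or_comm]

@[simp] lemma fbp_nil : fbp [] = 0 := rfl
@[simp] lemma fbp_single (a : ℕ) : fbp [a] = 0 := rfl

lemma fbp_cons_cons (a b : ℕ) (L : List ℕ) :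
    fbp (a :: b :: L) = fbp (b :: L) + (if prj (a, b) then 1 else 0) := by
  simp [fbp, List.countP_cons]

lemma fbp_le_cons (a : ℕ) (L : List ℕ) : fbp L ≤ fbp (a :: L) := by
  cases L with
  | nil => simp
  | cons b L => rw [fbp_cons_cons]; omega

lemma fbp_cons_le (a : ℕ) (L : List ℕ) : fbp (a :: L) ≤ fbp L + 1 := by
  cases L with
  | nil => simp
  | cons b L => rw [fbp_cons_cons]; split <;> omega

lemma fbp_append_ge : ∀ (A B : List ℕ), fbp A + fbp B ≤ fbp (A ++ B) := by
  intro A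
  induction A with
  | nil => intro B; simp
  | cons a A ih =>
    intro B
    cases A with
    | nil => simpa using fbp_le_cons a B
    | cons a' A' =>
      have h1 : fbp ((a :: a' :: A') ++ B) = fbp ((a' :: A') ++ B) + (if prj (a, a') then 1 else 0) := by
        simp only [List.cons_append]; rw [fbp_cons_cons]
      rw [h1, fbp_cons_cons]
      have := ih B
      omega

lemma fbp_append_le : ∀ (A B : List ℕ), fbp (A ++ B) ≤ fbp A + fbp B + 1 := by
  intro A
  induction A with
  | nil => intro B; simp
  | cons a A ih =>
    intro B
    cases A with
    | nil => simpa using fbp_cons_le a B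
    | cons a' A' =>
      have h1 : fbp ((a :: a' :: A') ++ B) = fbp ((a' :: A') ++ B) + (if prj (a, a') then 1 else 0) := by
        simp only [List.cons_append]; rw [fbp_cons_cons]
      rw [h1, fbp_cons_cons]
      have := ih B
      omega

lemma fbp_concat : ∀ (L : List ℕ) (a : ℕ),
    fbp (L ++ [a]) = fbp L +
      (match L.getLast? with | none => 0 | some x => if prj (x, a) then 1 else 0) := by
  intro L
  induction L with
  | nil => intro a; simp
  | cons x L ih =>
    intro a
    cases L with
    | nil => simp [fbp, List.countP_cons]
    | cons y L' =>
      have h1 : fbp ((x :: y :: L') ++ [a]) = fbp ((y :: L') ++ [a]) + (if prj (x, y) then 1 else 0) := by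
        simp only [List.cons_append]; rw [fbp_cons_cons]
      rw [h1, ih, fbp_cons_cons]
      have : (x :: y :: L').getLast? = (y :: L').getLast? := by
        simp [List.getLast?]
      rw [this]
      omega

lemma fbp_reverse : ∀ (L : List ℕ), fbp L.reverse = fbp L := by
  intro L
  induction L with
  | nil => simp
  | cons a L ih =>
    rw [List.reverse_cons, fbp_concat, ih, List.getLast?_reverse]
    cases L with
    | nil => simp
    | cons b L' =>
      rw [fbp_cons_cons]
      simp [List.head?, prj_swap]

lemma bp_eq (π : List ℕ) : bp π = 1 + fbp (π.drop 1) := by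
  have : π.drop 2 = (π.drop 1).drop 1 := by rw [List.drop_drop]
  rw [bp, this]; rfl

lemma fbp_range' : ∀ (m s : ℕ), fbp (List.range' s m) = 0 := by
  intro m
  induction m with
  | zero => intro s; rfl
  | succ m ih =>
    intro s
    cases m with
    | zero => rfl
    | succ m' =>
      rw [List.range'_succ, List.range'_succ, fbp_cons_cons, ← List.range'_succ]
      rw [ih (s+1)]
      simp [prj]

lemma bp_range (n : ℕ) : bp (List.range (n + 2)) = 1 := by
  rw [bp_eq]
  have : (List.range (n+2)).drop 1 = List.range' 1 (n+1) := by
    rw [List.range_eq_range', List.range'_succ]; rfl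
  rw [this, fbp_range' (n+1) 1]

lemma step_rev (h : ℕ) (t : List ℕ) (j : ℕ) (hj : 3 ≤ j) :
    bp (h :: t) ≤ bp (prefixReversal (h :: t) j) + 1 := by
  obtain ⟨j', rfl⟩ : ∃ j', j = j' + 1 := ⟨j - 1, by omega⟩
  have hres : prefixReversal (h :: t) (j' + 1) =
      h :: ((t.take j').reverse ++ t.drop j') := by
    simp [prefixReversal]
  rw [hres, bp_eq, bp_eq]
  simp only [List.drop_one, List.tail_cons]
  have h1 : fbp t ≤ fbp (t.take j') + fbp (t.drop j') + 1 := by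
    conv_lhs => rw [← List.take_append_drop j' t]
    exact fbp_append_le _ _
  have h2 : fbp (t.take j') + fbp (t.drop j') ≤ fbp ((t.take j').reverse ++ t.drop j') := by
    rw [← fbp_reverse (t.take j')]; exact fbp_append_ge _ _
  omega

lemma step_trans (h : ℕ) (t : List ℕ) (j k : ℕ) (hj : 2 ≤ j) (hjk : j < k) :
    bp (h :: t) ≤ bp (prefixTransposition (h :: t) j k) + 2 := by
  obtain ⟨j', rfl⟩ : ∃ j', j = j' + 1 := ⟨j - 1, by omega⟩
  obtain ⟨k', rfl⟩ : ∃ k', k = k' + 1 := ⟨k - 1, by omega⟩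
  have hres : prefixTransposition (h :: t) (j' + 1) (k' + 1) =
      h :: (((t.drop j').take (k' - j') ++ t.take j') ++ t.drop k') := by
    simp [prefixTransposition]
  rw [hres, bp_eq, bp_eq]
  simp only [List.drop_one, List.tail_cons]
  set B := t.take j'
  set C := (t.drop j').take (k' - j')
  set D := t.drop k'
  have hsplit : t = B ++ (C ++ D) := by
    rw [← List.take_append_drop j' t]
    congr 1
    rw [← List.take_append_drop (k' - j') (t.drop j'), List.drop_drop]
    congr 2
    omega
  have h1 : fbp t ≤ fbp B + fbp C + fbp D + 2 := by
    conv_lhs => rw [hsplit]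
    have := fbp_append_le B (C ++ D)
    have := fbp_append_le C D
    omega
  have h2 : fbp C + fbp B + fbp D ≤ fbp ((C ++ B) ++ D) := by
    have := fbp_append_ge (C ++ B) D
    have := fbp_append_ge C B
    omega
  omega

lemma step_transrev (h : ℕ) (t : List ℕ) (j k : ℕ) (hj : 2 ≤ j) (hjk : j < k) :
    bp (h :: t) ≤ bp (prefixTransreversal (h :: t) j k) + 2 := by
  obtain ⟨j', rfl⟩ : ∃ j', j = j' + 1 := ⟨j - 1, by omega⟩
  obtain ⟨k', rfl⟩ : ∃ k', k = k' + 1 := ⟨k - 1, by omega⟩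
  have hres : prefixTransreversal (h :: t) (j' + 1) (k' + 1) =
      h :: (((t.drop j').take (k' - j') ++ (t.take j').reverse) ++ t.drop k') := by
    simp [prefixTransreversal]
  rw [hres, bp_eq, bp_eq]
  simp only [List.drop_one, List.tail_cons]
  set B := t.take j'
  set C := (t.drop j').take (k' - j')
  set D := t.drop k'
  have hsplit : t = B ++ (C ++ D) := by
    rw [← List.take_append_drop j' t]
    congr 1
    rw [← List.take_append_drop (k' - j') (t.drop j'), List.drop_drop]
    congr 2
    omega
  have h1 : fbp t ≤ fbp B + fbp C + fbp D + 2 := by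
    conv_lhs => rw [hsplit]
    have := fbp_append_le B (C ++ D)
    have := fbp_append_le C D
    omega
  have h2 : fbp C + fbp B + fbp D ≤ fbp ((C ++ B.reverse) ++ D) := by
    have := fbp_append_ge (C ++ B.reverse) D
    have := fbp_append_ge C B.reverse
    rw [fbp_reverse] at this
    omega
  omega

lemma step (n : ℕ) (π : List ℕ) (hne : π ≠ []) (o : PrefOp) (hv : o.Valid n) :
    bp π + (if o.isRev then 1 else 0) ≤ bp (o.apply π) + 2 := by
  obtain ⟨h, t, rfl⟩ : ∃ h t, π = h :: t := by
    cases π with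
    | nil => exact absurd rfl hne
    | cons h t => exact ⟨h, t, rfl⟩
  cases o with
  | rev j =>
      have := step_rev h t j hv.1
      simpa [PrefOp.apply, PrefOp.isRev] using by omega
  | trans j k =>
      have := step_trans h t j k hv.1 hv.2.1
      simpa [PrefOp.apply, PrefOp.isRev] using by omega
  | transrev j k =>
      have := step_transrev h t j k hv.1 hv.2.1
      simpa [PrefOp.apply, PrefOp.isRev] using by omega

lemma apply_ne_nil (π : List ℕ) (hne : π ≠ []) (o : PrefOp) : o.apply π ≠ [] := by
  obtain ⟨h, t, rfl⟩ : ∃ h t, π = h :: t := by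
    cases π with
    | nil => exact absurd rfl hne
    | cons h t => exact ⟨h, t, rfl⟩
  cases o <;> simp [PrefOp.apply, prefixReversal, prefixTransposition, prefixTransreversal]

lemma seq_bound (n : ℕ) : ∀ (ops : List PrefOp) (π : List ℕ), π ≠ [] → ValidSeq n ops →
    bp π + ops.countP PrefOp.isRev ≤ bp (applySeq π ops) + 2 * ops.length := by
  intro ops
  induction ops with
  | nil => intro π _ _; simp [applySeq]
  | cons o os ih =>
    intro π hne hval
    have hv : o.Valid n := hval o List.mem_cons_self
    have hval' : ValidSeq n os := fun o' ho' => hval o' (List.mem_cons_of_mem o ho')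
    have h1 := step n π hne o hv
    have h2 := ih (o.apply π) (apply_ne_nil π hne o) hval'
    have h3 : (o :: os).countP PrefOp.isRev =
        os.countP PrefOp.isRev + (if o.isRev then 1 else 0) := by
      rw [List.countP_cons]
    have h4 : applySeq π (o :: os) = applySeq (o.apply π) os := rfl
    rw [h3, h4, List.length_cons]
    omega

end SortRTTAux

/-- adaptive lower bound: if a sequence of `ℓ` prefix
reversals / prefix transpositions / prefix transreversals sorts `π` and
exactly `r` of them are prefix reversals, then `2ℓ ≥ b(π) − 1 + r`. -/
theorem sortRTT_adaptive_lower_bound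
    (n : ℕ) (π : List ℕ) (hπ : IsPerm n π)
    (ops : List PrefOp) (hval : ValidSeq n ops)
    (hsort : applySeq π ops = List.range (n + 2))
    (r : ℕ) (hr : ops.countP PrefOp.isRev = r) :
    bp π - 1 + r ≤ 2 * ops.length := by
  have hne : π ≠ [] := by
    intro h
    have hlen := hπ.1.length_eq
    simp [h] at hlen
  have := SortRTTAux.seq_bound n ops π hne hval
  rw [hsort, SortRTTAux.bp_range, hr] at this
  have hbp : 1 ≤ bp π := by rw [SortRTTAux.bp_eq]; omega
  omega
end
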